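/- Let D be a bicolored directed cycle with one chord having a bikernel, and let C be the base cycle. Then C contains at most one monochromatic path (x,y,z) of two consecutive same-colored arcs, and if such a path exists, the chord of D must have y as an endpoint. -/

import Mathlib

/-- A bicolored digraph is given by two arc relations `A1` (color-1 arcs) and `A2`
(color-2 arcs). A monochromatic path of color `i` is a nonempty chain of `Ai`-arcs,
i.e. `Relation.TransGen Ai`. A set `B` is a bikernel by monochromatic paths if it is
nonempty, independent by monochromatic paths, absorbent with color 1 and dominant
with color 2. -/
def IsBikernel {V : Type*} (A1 A2 : V → V → Prop) (B : Set V) : Prop :=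
  B.Nonempty ∧
  (∀ u ∈ B, ∀ v ∈ B, u ≠ v →
    ¬ Relation.TransGen A1 u v ∧ ¬ Relation.TransGen A2 u v) ∧
  (∀ v, v ∉ B → ∃ b ∈ B, Relation.TransGen A1 v b) ∧
  (∀ v, v ∉ B → ∃ b ∈ B, Relation.TransGen A2 b v)

/-- The arc relation, for color `col`, of a bicolored directed cycle on `Fin n`
(arcs `(x_i, x_{(i+1) mod n})`, the arc leaving `x_i` colored `c i`; color 1 is `0`,
color 2 is `1`) together with one chord `(a, b)` of color `d`. -/
def chordCycArc (n : ℕ) (c : ℕ → Fin 2) (a b : Fin n) (d : Fin 2) (col : Fin 2) :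
    Fin n → Fin n → Prop :=
  fun x y => ((y : ℕ) = ((x : ℕ) + 1) % n ∧ c (x : ℕ) = col) ∨
    (x = a ∧ y = b ∧ d = col)

open Relation

lemma tg_first {α : Type*} {r : α → α → Prop} {u v : α} (h : TransGen r u v) : ∃ w, r u w :=
  @Relation.TransGen.head_induction_on α r v (fun a _ => ∃ w, r a w) u h
    (fun h => ⟨_, h⟩) (fun h' _ _ => ⟨_, h'⟩)

lemma tg_last {α : Type*} {r : α → α → Prop} {u v : α} (h : TransGen r u v) : ∃ w, r w v := by
  cases h with
  | single h => exact ⟨u, h⟩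
  | tail _ h => exact ⟨_, h⟩

lemma fin2 (x : Fin 2) : x = 0 ∨ x = 1 := by
  fin_cases x; exacts [Or.inl rfl, Or.inr rfl]

lemma mod_cancel (n x s t : ℕ) (h : (x + s) % n = (x + t) % n) : s % n = t % n :=
  Nat.ModEq.add_left_cancel' x h

lemma add_mod_ne (n : ℕ) {s : ℕ} (h0 : 0 < s) (hsn : s < n) (x : ℕ) :
    x % n ≠ (x + s) % n := by
  intro h
  have h2 : 0 % n = s % n := mod_cancel n x 0 s (by simpa using h)
  rw [Nat.zero_mod, Nat.mod_eq_of_lt hsn] at h2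
  omega

lemma mod_succ_inj (n : ℕ) {x y : ℕ} (hx : x < n) (hy : y < n)
    (h : (x + 1) % n = (y + 1) % n) : x = y := by
  have := Nat.ModEq.add_right_cancel' 1 (h : Nat.ModEq n (x+1) (y+1))
  rwa [Nat.ModEq, Nat.mod_eq_of_lt hx, Nat.mod_eq_of_lt hy] at this

/-- the pure cycle-step relation of a single color -/
def cycStep (n : ℕ) (c : ℕ → Fin 2) (col : Fin 2) : Fin n → Fin n → Prop :=
  fun x y => (y : ℕ) = ((x : ℕ) + 1) % n ∧ c (x : ℕ) = col

lemma step_struct {n : ℕ} {c : ℕ → Fin 2} {col : Fin 2} {u v : Fin n}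
    (h : TransGen (cycStep n c col) u v) :
    ∃ k, 1 ≤ k ∧ (v : ℕ) = ((u : ℕ) + k) % n ∧
      ∀ t < k, c (((u : ℕ) + t) % n) = col := by
  induction h with
  | single h =>
    refine ⟨1, le_refl _, h.1, ?_⟩
    intro t ht
    have : t = 0 := by omega
    subst this
    rw [Nat.add_zero, Nat.mod_eq_of_lt u.isLt]
    exact h.2
  | @tail w v hsub hlast ih =>
    obtain ⟨k, hk1, hkv, hkc⟩ := ih
    refine ⟨k + 1, by omega, ?_, ?_⟩
    · rw [hlast.1, hkv, Nat.mod_add_mod, Nat.add_assoc]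
    · intro t ht
      rcases Nat.lt_or_ge t k with h' | h'
      · exact hkc t h'
      · have : t = k := by omega
        subst this
        rw [← hkv]
        exact hlast.2

lemma step_all {n : ℕ} (hn : 0 < n) {c : ℕ → Fin 2} {col : Fin 2}
    (hall : ∀ j < n, c j = col) (u v : Fin n) :
    TransGen (cycStep n c col) u v := by
  have key : ∀ k (u v : Fin n), (v : ℕ) = ((u : ℕ) + (k + 1)) % n →
      TransGen (cycStep n c col) u v := by
    intro k
    induction k with
    | zero => intro u v hv; exact .single ⟨hv, hall _ u.isLt⟩
    | succ k ih =>
      intro u v hv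
      refine .tail (ih u ⟨((u : ℕ) + (k + 1)) % n, Nat.mod_lt _ hn⟩ rfl)
        ⟨?_, hall _ (Nat.mod_lt _ hn)⟩
      show (v : ℕ) = (((u : ℕ) + (k + 1)) % n + 1) % n
      rw [Nat.mod_add_mod]
      have h1 : (u : ℕ) + (k + 1) + 1 = (u : ℕ) + (k + 1 + 1) := by omega
      rw [h1]
      exact hv
  have hu := u.isLt
  have hv := v.isLt
  apply key ((v : ℕ) + n - (u : ℕ) - 1) u v
  have h1 : (u : ℕ) + ((v : ℕ) + n - (u : ℕ) - 1 + 1) = (v : ℕ) + n := by omega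
  rw [h1, Nat.add_mod_right, Nat.mod_eq_of_lt hv]

lemma all_of_struct {n : ℕ} (hn : 4 ≤ n) {c : ℕ → Fin 2} {col : Fin 2} {u v : Fin n}
    (huv : (u : ℕ) = ((v : ℕ) + 1) % n) (hvc : c (v : ℕ) = col)
    (h : TransGen (cycStep n c col) u v) : ∀ j < n, c j = col := by
  obtain ⟨k, hk1, hkv, hkc⟩ := step_struct h
  have hvn := v.isLt
  have hun := u.isLt
  have hkn : n - 1 ≤ k := by
    have h1 : ((v : ℕ) + (1 + k)) % n = ((v : ℕ) + 0) % n := by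
      rw [Nat.add_zero, Nat.mod_eq_of_lt hvn, ← Nat.add_assoc, ← Nat.mod_add_mod, ← huv]
      exact hkv.symm
    have h2 : (1 + k) % n = 0 % n := mod_cancel n (v : ℕ) (1 + k) 0 h1
    rw [Nat.zero_mod] at h2
    have h3 : n ∣ (1 + k) := Nat.dvd_of_mod_eq_zero h2
    have h4 : n ≤ 1 + k := Nat.le_of_dvd (by omega) h3
    omega
  intro j hj
  by_cases hjv : j = (v : ℕ)
  · rw [hjv]; exact hvc
  · have htj : ((u : ℕ) + ((n + j - (u : ℕ)) % n)) % n = j := by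
      rw [Nat.add_mod_mod]
      have h1 : (u : ℕ) + (n + j - (u : ℕ)) = j + n := by omega
      rw [h1, Nat.add_mod_right, Nat.mod_eq_of_lt hj]
    have htn : (n + j - (u : ℕ)) % n < n := Nat.mod_lt _ (by omega)
    have htne : (n + j - (u : ℕ)) % n ≠ n - 1 := by
      intro h'
      apply hjv
      rw [← htj, h', huv, Nat.mod_add_mod]
      have h1 : (v : ℕ) + 1 + (n - 1) = (v : ℕ) + n := by omega
      rw [h1, Nat.add_mod_right, Nat.mod_eq_of_lt hvn]
    have hlt : (n + j - (u : ℕ)) % n < k := by omega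
    rw [← htj]
    exact hkc _ hlt
lemma noMid (n : ℕ) (hn : 4 ≤ n) (c : ℕ → Fin 2) (a b : Fin n) (hab : a ≠ b)
    (hchord : (b : ℕ) ≠ ((a : ℕ) + 1) % n) (d : Fin 2) (B : Set (Fin n))
    (hB : IsBikernel (chordCycArc n c a b d 0) (chordCycArc n c a b d 1) B)
    (i : ℕ) (hi : i < n) (hc : c i = c ((i + 1) % n)) :
    ((a : ℕ) = (i + 1) % n ∧ c i = 1 ∧ d = 0) ∨
    ((b : ℕ) = (i + 1) % n ∧ c i = 0 ∧ d = 1) := by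
  obtain ⟨hne, hind, habs, hdom⟩ := hB
  have hn0 : 0 < n := by omega
  set p : Fin n := ⟨i, hi⟩ with hpdef
  set m : Fin n := ⟨(i+1) % n, Nat.mod_lt _ hn0⟩ with hmdef
  set q : Fin n := ⟨(i+2) % n, Nat.mod_lt _ hn0⟩ with hqdef
  have hpv : (p : ℕ) = i := rfl
  have hmv : (m : ℕ) = (i+1) % n := rfl
  have hqv : (q : ℕ) = (i+2) % n := rfl
  have h2eq : i + 1 + 1 = i + 2 := by omega
  have hcm : c ((i+1) % n) = c i := hc.symm
  have hpm : p ≠ m := by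
    intro h
    exact add_mod_ne n (s := 1) (by omega) (by omega) i
      (by rw [Nat.mod_eq_of_lt hi, ← hpv, ← hmv, h])
  have hmq : m ≠ q := by
    intro h
    exact add_mod_ne n (s := 1) (by omega) (by omega) (i+1)
      (by rw [← hmv, h, hqv, h2eq])
  have hpq : p ≠ q := by
    intro h
    exact add_mod_ne n (s := 2) (by omega) (by omega) i
      (by rw [Nat.mod_eq_of_lt hi, ← hpv, ← hqv, h])
  -- the two cycle arcs around m, stated for the correct color
  by_cases hma : (a : ℕ) = (i+1) % n
  · -- middle is a
    left
    refine ⟨hma, ?_⟩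
    have ham : a = m := Fin.ext hma
    rcases fin2 (c i) with h0 | h1
    · -- S1 : color 0 around a is impossible
      exfalso
      have haB : a ∈ B := by
        by_contra haB
        obtain ⟨t, htB, htp⟩ := hdom a haB
        obtain ⟨w, hw⟩ := tg_last htp
        rcases hw with ⟨hw1, hw2⟩ | ⟨_, hab', _⟩
        · have hwp : w = p := by
            apply Fin.ext
            apply mod_succ_inj n w.isLt (show (p : ℕ) < n from hi)
            rw [← hw1, ham, hmv, hpv]
          rw [hwp, hpv, h0] at hw2
          exact absurd hw2 (by decide)
        · exact hab hab'
      have hqB : q ∉ B := by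
        intro hqB
        have harc : chordCycArc n c a b d 0 a q := Or.inl
          ⟨by rw [hqv, ham, hmv, Nat.mod_add_mod, h2eq],
           by rw [ham, hmv, hcm]; exact h0⟩
        exact (hind a haB q hqB (by rw [ham]; exact hmq)).1 (.single harc)
      obtain ⟨t, htB, htp⟩ := hdom q hqB
      obtain ⟨w, hw⟩ := tg_last htp
      rcases hw with ⟨hw1, hw2⟩ | ⟨_, hqb, _⟩
      · have hwm : w = m := by
          apply Fin.ext
          apply mod_succ_inj n w.isLt (Nat.mod_lt _ hn0)
          rw [← hw1, hqv, Nat.mod_add_mod, h2eq]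
        rw [hwm, hmv, hcm, h0] at hw2
        exact absurd hw2 (by decide)
      · apply hchord
        rw [← hqb, hqv, hma, Nat.mod_add_mod, h2eq]
    · -- color 1 : must show d = 0
      refine ⟨h1, ?_⟩
      rcases fin2 d with hd0 | hd1
      · exact hd0
      · -- S3 : color 1 around a with d = 1 is impossible
        exfalso
        have haB : a ∈ B := by
          by_contra haB
          obtain ⟨t, htB, htp⟩ := habs a haB
          obtain ⟨w, hw⟩ := tg_first htp
          rcases hw with ⟨_, hw2⟩ | ⟨_, _, hd0'⟩
          · rw [ham, hmv, hcm, h1] at hw2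
            exact absurd hw2 (by decide)
          · rw [hd1] at hd0'
            exact absurd hd0' (by decide)
        have hpB : p ∉ B := by
          intro hpB
          have harc : chordCycArc n c a b d 1 p a := Or.inl
            ⟨by rw [ham, hmv, hpv], by rw [hpv]; exact h1⟩
          exact (hind p hpB a haB (by rw [ham]; exact hpm)).2 (.single harc)
        obtain ⟨t, htB, htp⟩ := habs p hpB
        obtain ⟨w, hw⟩ := tg_first htp
        rcases hw with ⟨_, hw2⟩ | ⟨hpa, _, _⟩
        · rw [hpv, h1] at hw2
          exact absurd hw2 (by decide)
        · exact hpm (hpa.trans ham)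
  · by_cases hmb : (b : ℕ) = (i+1) % n
    · -- middle is b
      right
      refine ⟨hmb, ?_⟩
      have hbm : b = m := Fin.ext hmb
      rcases fin2 (c i) with h0 | h1
      · -- color 0 : must show d = 1
        refine ⟨h0, ?_⟩
        rcases fin2 d with hd0 | hd1
        · -- S4 : color 0 around b with d = 0 is impossible
          exfalso
          have hbB : b ∈ B := by
            by_contra hbB
            obtain ⟨t, htB, htp⟩ := hdom b hbB
            obtain ⟨w, hw⟩ := tg_last htp
            rcases hw with ⟨hw1, hw2⟩ | ⟨_, _, hd1'⟩
            · have hwp : w = p := by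
                apply Fin.ext
                apply mod_succ_inj n w.isLt (show (p : ℕ) < n from hi)
                rw [← hw1, hbm, hmv, hpv]
              rw [hwp, hpv, h0] at hw2
              exact absurd hw2 (by decide)
            · rw [hd0] at hd1'
              exact absurd hd1' (by decide)
          have hqB : q ∉ B := by
            intro hqB
            have harc : chordCycArc n c a b d 0 b q := Or.inl
              ⟨by rw [hqv, hbm, hmv, Nat.mod_add_mod, h2eq],
               by rw [hbm, hmv, hcm]; exact h0⟩
            exact (hind b hbB q hqB (by rw [hbm]; exact hmq)).1 (.single harc)
          obtain ⟨t, htB, htp⟩ := hdom q hqB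
          obtain ⟨w, hw⟩ := tg_last htp
          rcases hw with ⟨hw1, hw2⟩ | ⟨_, hqb, _⟩
          · have hwm : w = m := by
              apply Fin.ext
              apply mod_succ_inj n w.isLt (Nat.mod_lt _ hn0)
              rw [← hw1, hqv, Nat.mod_add_mod, h2eq]
            rw [hwm, hmv, hcm, h0] at hw2
            exact absurd hw2 (by decide)
          · exact hmq (hqb.trans hbm).symm
        · exact hd1
      · -- S2 : color 1 around b is impossible
        exfalso
        have hbB : b ∈ B := by
          by_contra hbB
          obtain ⟨t, htB, htp⟩ := habs b hbB
          obtain ⟨w, hw⟩ := tg_first htp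
          rcases hw with ⟨_, hw2⟩ | ⟨hba, _, _⟩
          · rw [hbm, hmv, hcm, h1] at hw2
            exact absurd hw2 (by decide)
          · exact hab hba.symm
        have hpB : p ∉ B := by
          intro hpB
          have harc : chordCycArc n c a b d 1 p b := Or.inl
            ⟨by rw [hbm, hmv, hpv], by rw [hpv]; exact h1⟩
          exact (hind p hpB b hbB (by rw [hbm]; exact hpm)).2 (.single harc)
        obtain ⟨t, htB, htp⟩ := habs p hpB
        obtain ⟨w, hw⟩ := tg_first htp
        rcases hw with ⟨_, hw2⟩ | ⟨hpa, _, _⟩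
        · rw [hpv, h1] at hw2
          exact absurd hw2 (by decide)
        · apply hchord
          rw [← hpa, hpv]
          exact hmb
    · -- middle is neither a nor b : lemma A, always impossible
      exfalso
      have hane : a ≠ m := fun h => hma ((congrArg Fin.val h).trans hmv)
      have hbne : b ≠ m := fun h => hmb ((congrArg Fin.val h).trans hmv)
      rcases fin2 (c i) with h0 | h1
      · -- color 0 around m
        have hmB : m ∈ B := by
          by_contra hmB
          obtain ⟨t, htB, htp⟩ := hdom m hmB
          obtain ⟨w, hw⟩ := tg_last htp
          rcases hw with ⟨hw1, hw2⟩ | ⟨_, hbm', _⟩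
          · have hwp : w = p := by
              apply Fin.ext
              apply mod_succ_inj n w.isLt (show (p : ℕ) < n from hi)
              rw [← hw1, hmv, hpv]
            rw [hwp, hpv, h0] at hw2
            exact absurd hw2 (by decide)
          · exact hbne hbm'.symm
        have harc_pm : chordCycArc n c a b d 0 p m := Or.inl
          ⟨by rw [hmv, hpv], by rw [hpv]; exact h0⟩
        have harc_mq : chordCycArc n c a b d 0 m q := Or.inl
          ⟨by rw [hqv, hmv, Nat.mod_add_mod, h2eq], by rw [hmv, hcm]; exact h0⟩
        have hpB : p ∉ B := fun hpB => (hind p hpB m hmB hpm).1 (.single harc_pm)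
        have hqB : q ∉ B := fun hqB => (hind m hmB q hqB hmq).1 (.single harc_mq)
        obtain ⟨t, htB, htp⟩ := hdom q hqB
        obtain ⟨w, hw⟩ := tg_last htp
        have hqbd : q = b ∧ d = 1 := by
          rcases hw with ⟨hw1, hw2⟩ | ⟨_, hqb, hd1⟩
          · have hwm : w = m := by
              apply Fin.ext
              apply mod_succ_inj n w.isLt (Nat.mod_lt _ hn0)
              rw [← hw1, hqv, Nat.mod_add_mod, h2eq]
            rw [hwm, hmv, hcm, h0] at hw2
            exact absurd hw2 (by decide)
          · exact ⟨hqb, hd1⟩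
        obtain ⟨hqb, hd1⟩ := hqbd
        obtain ⟨t2, ht2B, ht2p⟩ := habs q hqB
        have ht2m : t2 = m := by
          by_contra hne'
          exact (hind m hmB t2 ht2B (fun h => hne' h.symm)).1 (ht2p.head harc_mq)
        rw [ht2m] at ht2p
        have hstep : TransGen (cycStep n c 0) q m := by
          refine TransGen.mono (fun x y h => ?_) _ _ ht2p
          refine h.resolve_right (fun h' => ?_)
          rw [hd1] at h'
          exact absurd h'.2.2 (by decide)
        have hall : ∀ j < n, c j = 0 :=
          all_of_struct hn (by rw [hqv, hmv, Nat.mod_add_mod, h2eq])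
            (by rw [hmv, hcm]; exact h0) hstep
        set v2 : Fin n := ⟨(i+3) % n, Nat.mod_lt _ hn0⟩ with hv2def
        have hv2v : (v2 : ℕ) = (i+3) % n := rfl
        have hmv2 : m ≠ v2 := by
          intro h
          exact add_mod_ne n (s := 2) (by omega) (by omega) (i+1)
            (by rw [← hmv, h, hv2v, show i+1+2 = i+3 from by omega])
        have hv2b : v2 ≠ b := by
          intro h
          exact add_mod_ne n (s := 1) (by omega) (by omega) (i+2)
            (by rw [← hqv, hqb, ← h, hv2v, show i+2+1 = i+3 from by omega])
        have hv2B : v2 ∈ B := by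
          by_contra hv2B
          obtain ⟨t3, ht3B, ht3p⟩ := hdom v2 hv2B
          obtain ⟨w3, hw3⟩ := tg_last ht3p
          rcases hw3 with ⟨_, hw32⟩ | ⟨_, hv2b', _⟩
          · have := hall (w3 : ℕ) w3.isLt
            rw [hw32] at this
            exact absurd this (by decide)
          · exact hv2b hv2b'
        exact (hind m hmB v2 hv2B hmv2).1
          (TransGen.mono (fun x y h => Or.inl h) _ _ (step_all hn0 hall m v2))
      · -- color 1 around m
        have hmB : m ∈ B := by
          by_contra hmB
          obtain ⟨t, htB, htp⟩ := habs m hmB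
          obtain ⟨w, hw⟩ := tg_first htp
          rcases hw with ⟨_, hw2⟩ | ⟨hma', _, _⟩
          · rw [hmv, hcm, h1] at hw2
            exact absurd hw2 (by decide)
          · exact hane hma'.symm
        have harc_pm : chordCycArc n c a b d 1 p m := Or.inl
          ⟨by rw [hmv, hpv], by rw [hpv]; exact h1⟩
        have hpB : p ∉ B := fun hpB => (hind p hpB m hmB hpm).2 (.single harc_pm)
        obtain ⟨t, htB, htp⟩ := habs p hpB
        obtain ⟨w, hw⟩ := tg_first htp
        have hpad : p = a ∧ d = 0 := by
          rcases hw with ⟨_, hw2⟩ | ⟨hpa, _, hd0⟩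
          · rw [hpv, h1] at hw2
            exact absurd hw2 (by decide)
          · exact ⟨hpa, hd0⟩
        obtain ⟨hpa, hd0⟩ := hpad
        obtain ⟨s, hsB, hsp⟩ := hdom p hpB
        have hsm : s = m := by
          by_contra hne'
          exact (hind s hsB m hmB hne').2 (hsp.tail harc_pm)
        rw [hsm] at hsp
        have hstep : TransGen (cycStep n c 1) m p := by
          refine TransGen.mono (fun x y h => ?_) _ _ hsp
          refine h.resolve_right (fun h' => ?_)
          rw [hd0] at h'
          exact absurd h'.2.2 (by decide)
        have hall : ∀ j < n, c j = 1 :=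
          all_of_struct hn (by rw [hmv, hpv]) (by rw [hpv]; exact h1) hstep
        set v2 : Fin n := ⟨(i+3) % n, Nat.mod_lt _ hn0⟩ with hv2def
        have hv2v : (v2 : ℕ) = (i+3) % n := rfl
        have hmv2 : m ≠ v2 := by
          intro h
          exact add_mod_ne n (s := 2) (by omega) (by omega) (i+1)
            (by rw [← hmv, h, hv2v, show i+1+2 = i+3 from by omega])
        have hv2a : v2 ≠ a := by
          intro h
          exact add_mod_ne n (s := 3) (by omega) (by omega) i
            (by rw [Nat.mod_eq_of_lt hi, ← hv2v, h, ← hpa, hpv])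
        have hv2B : v2 ∈ B := by
          by_contra hv2B
          obtain ⟨t3, ht3B, ht3p⟩ := habs v2 hv2B
          obtain ⟨w3, hw3⟩ := tg_first ht3p
          rcases hw3 with ⟨_, hw32⟩ | ⟨hv2a', _, _⟩
          · have := hall (v2 : ℕ) v2.isLt
            rw [hw32] at this
            exact absurd this (by decide)
          · exact hv2a hv2a'
        exact (hind m hmB v2 hv2B hmv2).2
          (TransGen.mono (fun x y h => Or.inl h) _ _ (step_all hn0 hall m v2))

/-- If a bicolored directed cycle with one chord has a bikernel, then the base cycle
has at most one monochromatic path of two consecutive arcs, and if such a path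
(with middle vertex `x_{(i+1) mod n}`) exists, that middle vertex is an endpoint of
the chord. -/
theorem chord_cycle_at_most_one_mono_two_arcs (n : ℕ) (hn : 4 ≤ n) (c : ℕ → Fin 2)
    (a b : Fin n) (hab : a ≠ b) (hchord : (b : ℕ) ≠ ((a : ℕ) + 1) % n) (d : Fin 2)
    (hB : ∃ B, IsBikernel (chordCycArc n c a b d 0) (chordCycArc n c a b d 1) B) :
    (∀ i, i < n → ∀ j, j < n →
      c i = c ((i + 1) % n) → c j = c ((j + 1) % n) → i = j) ∧
    (∀ i, i < n → c i = c ((i + 1) % n) →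
      ((a : ℕ) = (i + 1) % n ∨ (b : ℕ) = (i + 1) % n)) := by
  obtain ⟨B, hBk⟩ := hB
  constructor
  · intro i hi j hj hci hcj
    rcases noMid n hn c a b hab hchord d B hBk i hi hci with ⟨ha1, _, hd0⟩ | ⟨hb1, _, hd1⟩ <;>
      rcases noMid n hn c a b hab hchord d B hBk j hj hcj with ⟨ha2, _, hd0'⟩ | ⟨hb2, _, hd1'⟩
    · exact mod_succ_inj n hi hj (ha1.symm.trans ha2)
    · exact absurd (hd0.symm.trans hd1') (by decide)
    · exact absurd (hd1.symm.trans hd0') (by decide)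
    · exact mod_succ_inj n hi hj (hb1.symm.trans hb2)
  · intro i hi hci
    rcases noMid n hn c a b hab hchord d B hBk i hi hci with ⟨h, _⟩ | ⟨h, _⟩
    exacts [Or.inl h, Or.inr h]
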